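/- Let e₀ and e₁ be orthonormal vectors in a complex inner product space, and for θ ∈ ℝ define φ_θ := (sin θ)·e₁ + (cos θ)·e₀. Then for all real numbers β and γ: φ_{−β} − 2⟨φ_γ, φ_{−β}⟩·φ_γ = −φ_{β+2γ}. -/

import Mathlib

theorem stmt8 {E : Type*} [NormedAddCommGroup E] [InnerProductSpace ℂ E]
    (e₀ e₁ : E) (h0 : ‖e₀‖ = 1) (h1 : ‖e₁‖ = 1) (horth : (inner ℂ e₀ e₁ : ℂ) = 0)
    (β γ : ℝ) :
    let φ : ℝ → E := fun θ => (Real.sin θ : ℂ) • e₁ + (Real.cos θ : ℂ) • e₀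
    φ (-β) - (2 * (inner ℂ (φ γ) (φ (-β)) : ℂ)) • φ γ = -φ (β + 2 * γ) := by
  intro φ
  have h10 : (inner ℂ e₁ e₀ : ℂ) = 0 := by
    rw [← inner_conj_symm, horth, map_zero]
  have h00 : (inner ℂ e₀ e₀ : ℂ) = 1 := by
    rw [inner_self_eq_norm_sq_to_K, h0]; norm_num
  have h11 : (inner ℂ e₁ e₁ : ℂ) = 1 := by
    rw [inner_self_eq_norm_sq_to_K, h1]; norm_num
  have hip : (inner ℂ (φ γ) (φ (-β)) : ℂ) = Real.cos (β + γ) := by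
    simp only [φ, inner_add_left, inner_add_right, inner_smul_left, inner_smul_right,
      h10, horth, h00, h11, mul_zero, mul_one, zero_add, add_zero, Complex.conj_ofReal]
    push_cast [Real.sin_neg, Real.cos_neg, Real.cos_add]
    ring
  simp only [φ, hip, smul_add, smul_smul, neg_add, ← neg_smul, sub_eq_add_neg, neg_add]
  have hs : -((2 * (Real.cos (β + γ) : ℂ)) * Real.sin γ) + Real.sin (-β)
      = -(Real.sin (β + 2 * γ) : ℂ) := by
    push_cast [Real.sin_neg, Real.cos_add, Real.sin_add, Real.cos_two_mul, Real.sin_two_mul]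
    linear_combination 2 * Complex.sin β * (Complex.sin_sq_add_cos_sq γ)
  have hc : -((2 * (Real.cos (β + γ) : ℂ)) * Real.cos γ) + Real.cos (-β)
      = -(Real.cos (β + 2 * γ) : ℂ) := by
    push_cast [Real.cos_neg, Real.cos_add, Real.sin_add, Real.cos_two_mul, Real.sin_two_mul]
    ring
  rw [← hs, ← hc]
  module
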